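/- Validity of the block acceptance probability h_{Lk} (Eq. (2) defines a number in [0,1]): For all real numbers P, Q with 0 ≤ P ≤ 1 and 0 < Q ≤ 1, and every integer K ≥ 1, one has Q·[1 − (1 − min{P/Q, 1})^K] ≤ 1 − (1 − P)^K; in particular, if moreover P > 0, then the quantity h := Q·[1 − (1 − min{P/Q, 1})^K] / [1 − (1 − P)^K] lies in [0, 1]. -/
import Mathlib


/-- Validity of the block acceptance probability `h_{Lk}` of Eq. (2): for
`0 ≤ P ≤ 1`, `0 < Q ≤ 1` and `K ≥ 1` one has
`Q·[1 − (1 − min{P/Q, 1})^K] ≤ 1 − (1 − P)^K`; in particular if `P > 0` then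
`h := Q·[1 − (1 − min{P/Q, 1})^K] / [1 − (1 − P)^K] ∈ [0, 1]`. -/
theorem hLk_valid (P Q : ℝ) (hP0 : 0 ≤ P) (hP1 : P ≤ 1) (hQ0 : 0 < Q) (hQ1 : Q ≤ 1)
    (K : ℕ) (hK : 1 ≤ K) :
    Q * (1 - (1 - min (P / Q) 1) ^ K) ≤ 1 - (1 - P) ^ K ∧
    (0 < P →
      0 ≤ Q * (1 - (1 - min (P / Q) 1) ^ K) / (1 - (1 - P) ^ K) ∧
      Q * (1 - (1 - min (P / Q) 1) ^ K) / (1 - (1 - P) ^ K) ≤ 1) := by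
  set m : ℝ := min (P / Q) 1 with hm
  have hm0 : 0 ≤ m := le_min (div_nonneg hP0 hQ0.le) one_pos.le
  have hm1 : m ≤ 1 := min_le_right _ _
  have hQm : Q * m ≤ P := by
    rcases le_total (P / Q) 1 with h | h
    · have : m = P / Q := min_eq_left h
      rw [this, mul_div_cancel₀ _ hQ0.ne']
    · have hmm : m = 1 := min_eq_right h
      rw [hmm, mul_one]
      calc Q = Q * 1 := (mul_one Q).symm
        _ ≤ Q * (P / Q) := by
            apply mul_le_mul_of_nonneg_left h hQ0.le
        _ = P := mul_div_cancel₀ _ hQ0.ne'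
  -- convexity step
  have hconv := (convexOn_pow K).2 (Set.mem_Ici.mpr (by linarith : (0:ℝ) ≤ 1 - m))
      (Set.mem_Ici.mpr (zero_le_one)) hQ0.le (by linarith : (0:ℝ) ≤ 1 - Q) (by ring)
  simp only [smul_eq_mul, one_pow, mul_one] at hconv
  have hcomb : Q * (1 - m) + (1 - Q) = 1 - Q * m := by ring
  rw [hcomb] at hconv
  have hpow : (1 - P) ^ K ≤ (1 - Q * m) ^ K :=
    pow_le_pow_left₀ (by linarith) (by linarith) K
  have hmain : Q * (1 - (1 - m) ^ K) ≤ 1 - (1 - P) ^ K := by nlinarith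
  refine ⟨hmain, fun hPpos => ?_⟩
  have hden : 0 < 1 - (1 - P) ^ K := by
    have : (1 - P) ^ K < 1 :=
      pow_lt_one₀ (by linarith) (by linarith) (by omega)
    linarith
  have hnum : 0 ≤ Q * (1 - (1 - m) ^ K) := by
    have : (1 - m) ^ K ≤ 1 := pow_le_one₀ (by linarith) (by linarith)
    nlinarith
  exact ⟨div_nonneg hnum hden.le, (div_le_one hden).mpr hmain⟩
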